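/- For every δ > 0 there exists N such that for every perfect square n ≥ N and every subset B' ⊆ B with |B'| ≥ δ|B|, the number of vectors u ∈ F_2^n satisfying Σ_{w∈B'} χ(u·w) ≥ 0.98·|B'| is at most exp(n^{2/3}), where for each w the term χ(u·w) equals 1 if the F_2 dot product u·w = Σ_k u(k)w(k) is 0 and equals −1 otherwise. -/

import Mathlib

open Finset

/-- `B = {v ∈ F_2^n : |v| = √n}` (for `n = s²`). -/
def sphereB (n s : ℕ) : Finset (Fin n → ZMod 2) :=
  Finset.univ.filter (fun v => hammingNorm v = s)

/-- The dot product in `F_2^n`. -/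
def dotF2 (n : ℕ) (u w : Fin n → ZMod 2) : ZMod 2 := ∑ k, u k * w k

/-- `χ(u·w) = 1` if `u·w = 0` and `-1` otherwise. -/
noncomputable def chi (n : ℕ) (u w : Fin n → ZMod 2) : ℝ :=
  if dotF2 n u w = 0 then 1 else -1

lemma zmod2_cases (x : ZMod 2) : x = 0 ∨ x = 1 := by revert x; decide

lemma zmod2_ne_zero (x : ZMod 2) : x ≠ 0 ↔ x = 1 := by
  rcases zmod2_cases x with h | h <;> subst h <;> simp

noncomputable def chi0 : ZMod 2 → ℝ := fun x => if x = 0 then 1 else -1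

namespace S16
variable {n : ℕ}

def supp (w : Fin n → ZMod 2) : Finset (Fin n) := univ.filter (fun i => w i = 1)

lemma mem_supp {w : Fin n → ZMod 2} {i : Fin n} : i ∈ supp w ↔ w i = 1 := by
  simp [supp]

lemma hn_eq_supp (w : Fin n → ZMod 2) : hammingNorm w = #(supp w) := by
  apply Finset.card_bij (fun i _ => i) <;> simp [supp, hammingNorm, zmod2_ne_zero]

lemma supp_update_zero {w : Fin n → ZMod 2} {i : Fin n} (h : w i = 1) :
    supp (Function.update w i 0) = (supp w).erase i := by
  ext j
  by_cases hj : j = i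
  · subst hj; simp [mem_supp, Function.update_self]
  · simp [mem_supp, Function.update_of_ne hj, Finset.mem_erase, hj]

lemma supp_update_one {w : Fin n → ZMod 2} {i : Fin n} (h : w i = 0) :
    supp (Function.update w i 1) = insert i (supp w) := by
  ext j
  by_cases hj : j = i
  · subst hj; simp [mem_supp, Function.update_self]
  · simp [mem_supp, Function.update_of_ne hj, hj]

lemma dot_update (u w : Fin n → ZMod 2) (i : Fin n) (c : ZMod 2) :
    dotF2 n u (Function.update w i c) = dotF2 n u w + u i * (w i + c) := by
  unfold dotF2
  rw [← Finset.sum_erase_add _ _ (Finset.mem_univ i),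
      ← Finset.sum_erase_add _ (fun k => u k * w k) (Finset.mem_univ i)]
  have h1 : ∑ k ∈ univ.erase i, u k * Function.update w i c k
      = ∑ k ∈ univ.erase i, u k * w k := by
    apply Finset.sum_congr rfl
    intro k hk
    rw [Function.update_of_ne (Finset.mem_erase.1 hk).1]
  rw [h1, Function.update_self]
  have : ∀ a b c : ZMod 2, a * c = a * b + a * (b + c) := by decide
  rw [add_assoc, ← this]
end S16

namespace S16

lemma chi0_sq (x : ZMod 2) : chi0 x * chi0 x = 1 := by
  rcases zmod2_cases x with h | h <;> subst h <;> norm_num [chi0]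

lemma chi0_add' (x y : ZMod 2) : chi0 (x + y) = chi0 x * chi0 y := by
  have h2 : (1 + 1 : ZMod 2) = 0 := by decide
  rcases zmod2_cases x with hx | hx <;> rcases zmod2_cases y with hy | hy <;>
    subst hx <;> subst hy <;> simp [chi0, h2]

def sphere (n j : ℕ) : Finset (Fin n → ZMod 2) := univ.filter (fun w => hammingNorm w = j)

lemma mem_sphere {j : ℕ} {w : Fin n → ZMod 2} : w ∈ sphere n j ↔ #(supp w) = j := by
  simp [sphere, hn_eq_supp]

noncomputable def A (n : ℕ) (u : Fin n → ZMod 2) (j : ℕ) : ℝ :=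
  ∑ w ∈ sphere n j, chi0 (dotF2 n u w)

noncomputable def G (n : ℕ) (u : Fin n → ZMod 2) (j : ℕ) : ℝ :=
  ∑ w ∈ sphere n j, chi0 (dotF2 n u w) * #(supp w ∩ supp u)

-- sum of chi0 (u i) over a finset
lemma sum_chi0_over (u : Fin n → ZMod 2) (S : Finset (Fin n)) :
    ∑ i ∈ S, chi0 (u i) = (#S : ℝ) - 2 * #(S ∩ supp u) := by
  classical
  rw [← Finset.sum_filter_add_sum_filter_not S (fun i => u i = 1)]
  have h1 : ∀ i ∈ S.filter (fun i => u i = 1), chi0 (u i) = -1 := by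
    intro i hi; simp only [Finset.mem_filter] at hi
    simp [chi0, hi.2]
  have h0 : ∀ i ∈ S.filter (fun i => ¬ u i = 1), chi0 (u i) = 1 := by
    intro i hi; simp only [Finset.mem_filter] at hi
    have : u i = 0 := by
      rcases zmod2_cases (u i) with h | h
      · exact h
      · exact absurd h hi.2
    simp [chi0, this]
  rw [Finset.sum_congr rfl h1, Finset.sum_congr rfl h0]
  have hcap : S ∩ supp u = S.filter (fun i => u i = 1) := by
    ext i; simp [supp, Finset.mem_filter, and_comm]
  rw [hcap]
  rw [Finset.sum_const, Finset.sum_const]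
  have hsplit : (#(S.filter (fun i => u i = 1)) : ℝ) + #(S.filter (fun i => ¬ u i = 1)) = #S := by
    rw [← Nat.cast_add, Finset.card_filter_add_card_filter_not]
  simp only [nsmul_eq_mul]
  push_cast
  linarith
end S16

namespace S16

lemma sphere_mem_val {j : ℕ} {w : Fin n → ZMod 2} (hw : w ∈ sphere n j) {i : Fin n}
    (hi : i ∈ supp w) : w i = 1 := mem_supp.1 hi

lemma zmod2_eq_zero {x : ZMod 2} (h : ¬ x = 1) : x = 0 := by
  rcases zmod2_cases x with h0 | h1
  · exact h0
  · exact absurd h1 h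

lemma chi0_update_zero (u w : Fin n → ZMod 2) {i : Fin n} (h : w i = 1) :
    chi0 (dotF2 n u (Function.update w i 0)) = chi0 (dotF2 n u w) * chi0 (u i) := by
  rw [dot_update, chi0_add', h]
  norm_num

lemma chi0_update_one (u w : Fin n → ZMod 2) {i : Fin n} (h : w i = 0) :
    chi0 (dotF2 n u (Function.update w i 1)) = chi0 (dotF2 n u w) * chi0 (u i) := by
  rw [dot_update, chi0_add', h]
  norm_num

/-- The key reindexing: summing `chi0 (dot u w) * c (u i)`-type quantities over pairs
`(w, i)` with `w` in `sphere (j+1)`, `i ∈ supp w`, equals the sum over pairs `(v, i)`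
with `v ∈ sphere j`, `i ∉ supp v`. -/
lemma sigma_reindex (j : ℕ) (F : (Fin n → ZMod 2) → Fin n → ℝ) :
    ∑ x ∈ (sphere n (j+1)).sigma (fun w => supp w), F x.1 x.2
      = ∑ x ∈ (sphere n j).sigma (fun v => univ \ supp v), F (Function.update x.1 x.2 1) x.2 := by
  apply Finset.sum_bij' (i := fun x _ => (⟨Function.update x.1 x.2 0, x.2⟩ : Σ _ : Fin n → ZMod 2, Fin n))
    (j := fun x _ => (⟨Function.update x.1 x.2 1, x.2⟩ : Σ _ : Fin n → ZMod 2, Fin n))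
  · rintro ⟨w, i⟩ ha
    rw [Finset.mem_sigma] at ha ⊢
    obtain ⟨hw, hi⟩ := ha
    dsimp only at hw hi ⊢
    have h1 : w i = 1 := mem_supp.1 hi
    constructor
    · rw [mem_sphere, supp_update_zero h1, Finset.card_erase_of_mem hi, mem_sphere.1 hw]
      omega
    · rw [Finset.mem_sdiff]
      refine ⟨Finset.mem_univ _, ?_⟩
      rw [mem_supp, Function.update_self]
      decide
  · rintro ⟨v, i⟩ ha
    rw [Finset.mem_sigma] at ha ⊢
    obtain ⟨hv, hi⟩ := ha
    dsimp only at hv hi ⊢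
    rw [Finset.mem_sdiff, mem_supp] at hi
    have h0 : v i = 0 := zmod2_eq_zero hi.2
    constructor
    · rw [mem_sphere, supp_update_one h0,
        Finset.card_insert_of_notMem (by rw [mem_supp]; exact hi.2), mem_sphere.1 hv]
    · rw [mem_supp, Function.update_self]
  · rintro ⟨w, i⟩ ha
    rw [Finset.mem_sigma] at ha
    have h1 : w i = 1 := mem_supp.1 ha.2
    dsimp only
    have : Function.update (Function.update w i 0) i 1 = w := by
      rw [Function.update_idem, ← h1, Function.update_eq_self]
    simp [this]
  · rintro ⟨v, i⟩ ha
    rw [Finset.mem_sigma, Finset.mem_sdiff, mem_supp] at ha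
    have h0 : v i = 0 := zmod2_eq_zero ha.2.2
    dsimp only
    have : Function.update (Function.update v i 1) i 0 = v := by
      rw [Function.update_idem, ← h0, Function.update_eq_self]
    simp [this]
  · rintro ⟨w, i⟩ ha
    rw [Finset.mem_sigma] at ha
    have h1 : w i = 1 := mem_supp.1 ha.2
    have hup : Function.update (Function.update w i 0) i 1 = w := by
      rw [Function.update_idem, ← h1, Function.update_eq_self]
    dsimp only
    rw [hup]

end S16

namespace S16

lemma L1 (u : Fin n → ZMod 2) (j : ℕ) :
    ((j:ℝ)+1) * A n u (j+1)
      = ((n:ℝ) - j - 2 * #(supp u)) * A n u j + 2 * G n u j := by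
  classical
  have lhs : ((j:ℝ)+1) * A n u (j+1)
      = ∑ x ∈ (sphere n (j+1)).sigma (fun w => supp w), chi0 (dotF2 n u x.1) := by
    rw [Finset.sum_sigma, A, Finset.mul_sum]
    apply Finset.sum_congr rfl
    intro w hw
    dsimp only
    rw [Finset.sum_const, nsmul_eq_mul, mem_sphere.1 hw]
    push_cast
    ring
  rw [lhs, sigma_reindex j (fun w i => chi0 (dotF2 n u w))]
  have step : ∀ x ∈ (sphere n j).sigma (fun v => univ \ supp v),
      chi0 (dotF2 n u (Function.update x.1 x.2 1))
        = chi0 (dotF2 n u x.1) * chi0 (u x.2) := by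
    rintro ⟨v, i⟩ hx
    rw [Finset.mem_sigma, Finset.mem_sdiff, mem_supp] at hx
    exact chi0_update_one u v (zmod2_eq_zero hx.2.2)
  rw [Finset.sum_congr rfl step, Finset.sum_sigma]
  have inner : ∀ v ∈ sphere n j,
      ∑ i ∈ univ \ supp v, chi0 (dotF2 n u v) * chi0 (u i)
        = chi0 (dotF2 n u v) * (((n:ℝ) - j) - 2 * ((#(supp u) : ℝ) - #(supp v ∩ supp u))) := by
    intro v hv
    rw [← Finset.mul_sum, sum_chi0_over]
    congr 2
    · rw [Finset.card_sdiff_of_subset (Finset.subset_univ _), mem_sphere.1 hv, Finset.card_univ,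
        Fintype.card_fin]
      have : j ≤ n := by
        rw [← mem_sphere.1 hv]
        exact le_trans (Finset.card_le_card (Finset.subset_univ _)) (by simp)
      push_cast [Nat.cast_sub this]
      ring
    · have hset : (univ \ supp v) ∩ supp u = supp u \ (supp v ∩ supp u) := by
        ext i; simp [Finset.mem_sdiff, Finset.mem_inter]; tauto
      rw [hset, Finset.card_sdiff_of_subset (Finset.inter_subset_right)]
      have hle : #(supp v ∩ supp u) ≤ #(supp u) := Finset.card_le_card Finset.inter_subset_right
      push_cast [Nat.cast_sub hle]
      ring
  rw [Finset.sum_congr rfl inner]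
  unfold A G
  rw [Finset.mul_sum, Finset.mul_sum, ← Finset.sum_add_distrib]
  exact Finset.sum_congr rfl (fun v hv => by ring)

lemma L2 (u : Fin n → ZMod 2) (j : ℕ) :
    G n u (j+1) = G n u j - (#(supp u) : ℝ) * A n u j := by
  classical
  have lhs : G n u (j+1)
      = ∑ x ∈ (sphere n (j+1)).sigma (fun w => supp w),
          (if x.2 ∈ supp u then chi0 (dotF2 n u x.1) else 0) := by
    rw [Finset.sum_sigma, G]
    apply Finset.sum_congr rfl
    intro w hw
    dsimp only
    rw [Finset.sum_ite_mem, Finset.sum_const, nsmul_eq_mul]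
    ring
  rw [lhs, sigma_reindex (j := j) (F := fun w i => if i ∈ supp u then chi0 (dotF2 n u w) else 0)]
  have step : ∀ x ∈ (sphere n j).sigma (fun v => univ \ supp v),
      (if x.2 ∈ supp u then chi0 (dotF2 n u (Function.update x.1 x.2 1)) else 0)
        = (if x.2 ∈ supp u then chi0 (dotF2 n u x.1) * chi0 (u x.2) else 0) := by
    rintro ⟨v, i⟩ hx
    rw [Finset.mem_sigma, Finset.mem_sdiff, mem_supp] at hx
    by_cases h : i ∈ supp u
    · rw [if_pos h, if_pos h, chi0_update_one u v (zmod2_eq_zero hx.2.2)]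
    · rw [if_neg h, if_neg h]
  rw [Finset.sum_congr rfl step, Finset.sum_sigma]
  have inner : ∀ v ∈ sphere n j,
      ∑ i ∈ univ \ supp v, (if i ∈ supp u then chi0 (dotF2 n u v) * chi0 (u i) else 0)
        = chi0 (dotF2 n u v) * (-(((#(supp u) : ℝ)) - #(supp v ∩ supp u))) := by
    intro v hv
    rw [Finset.sum_ite_mem]
    have hval : ∀ i ∈ (univ \ supp v) ∩ supp u,
        chi0 (dotF2 n u v) * chi0 (u i) = - chi0 (dotF2 n u v) := by
      intro i hi
      rw [Finset.mem_inter, mem_supp] at hi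
      rw [hi.2]
      norm_num [chi0]
    rw [Finset.sum_congr rfl hval, Finset.sum_const, nsmul_eq_mul]
    have hset : (univ \ supp v) ∩ supp u = supp u \ (supp v ∩ supp u) := by
      ext i; simp [Finset.mem_sdiff, Finset.mem_inter]; tauto
    rw [hset, Finset.card_sdiff_of_subset (Finset.inter_subset_right)]
    have hle : #(supp v ∩ supp u) ≤ #(supp u) := Finset.card_le_card Finset.inter_subset_right
    push_cast [Nat.cast_sub hle]
    ring
  rw [Finset.sum_congr rfl inner]
  unfold A G
  rw [Finset.mul_sum, ← Finset.sum_sub_distrib]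
  exact Finset.sum_congr rfl (fun v hv => by ring)

lemma three_term (u : Fin n → ZMod 2) (j : ℕ) :
    ((j:ℝ)+2) * A n u (j+2)
      = ((n:ℝ) - 2 * #(supp u)) * A n u (j+1) - ((n:ℝ) - j) * A n u j := by
  have h1 := L1 u (j+1)
  have h2 := L2 u j
  have h0 := L1 u j
  push_cast at h1 h0 ⊢
  -- h1 : (j+1+1) A_{j+2} = (n - (j+1) - 2t) A_{j+1} + 2 G_{j+1}
  -- h2 : G_{j+1} = G_j - t A_j
  -- h0 : (j+1) A_{j+1} = (n - j - 2t) A_j + 2 G_j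
  nlinarith [h1, h2, h0]

end S16

namespace S16

lemma sphere_zero (hn : True) : sphere n 0 = {0} := by
  ext w
  simp only [sphere, Finset.mem_filter, Finset.mem_univ, true_and, Finset.mem_singleton]
  rw [hammingNorm_eq_zero]

lemma dot_zero_right (u : Fin n → ZMod 2) : dotF2 n u 0 = 0 := by
  simp [dotF2]

lemma A_zero (u : Fin n → ZMod 2) : A n u 0 = 1 := by
  rw [A, sphere_zero trivial, Finset.sum_singleton]
  rw [show ((0 : Fin n → ZMod 2) : Fin n → ZMod 2) = (fun _ => 0) from rfl]
  rw [show dotF2 n u (fun _ => 0) = 0 by simp [dotF2]]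
  rfl

lemma G_zero (u : Fin n → ZMod 2) : G n u 0 = 0 := by
  rw [G, sphere_zero trivial, Finset.sum_singleton]
  have : supp (0 : Fin n → ZMod 2) = ∅ := by
    ext i; simp [mem_supp]
  rw [this]
  simp

lemma A_one (u : Fin n → ZMod 2) : A n u 1 = (n : ℝ) - 2 * #(supp u) := by
  have := L1 u 0
  rw [A_zero, G_zero] at this
  push_cast at this
  linarith

lemma card_sphere (j : ℕ) : #(sphere n j) = n.choose j := by
  classical
  have hc : n.choose j = #(Finset.powersetCard j (univ : Finset (Fin n))) := by
    rw [Finset.card_powersetCard, Finset.card_univ, Fintype.card_fin]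
  rw [hc]
  apply Finset.card_bij (fun w _ => supp w)
  · intro w hw
    rw [Finset.mem_powersetCard]
    exact ⟨Finset.subset_univ _, mem_sphere.1 hw⟩
  · intro w₁ h₁ w₂ h₂ hs
    funext i
    have m : (w₁ i = 1) ↔ (w₂ i = 1) := by rw [← mem_supp, ← mem_supp, hs]
    rcases zmod2_cases (w₁ i) with h | h <;> rcases zmod2_cases (w₂ i) with h' | h' <;>
      rw [h, h'] <;> rw [h, h'] at m <;> first
        | rfl
        | simp at m
  · intro T hT
    rw [Finset.mem_powersetCard] at hT
    refine ⟨fun i => if i ∈ T then 1 else 0, ?_, ?_⟩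
    · rw [mem_sphere]
      have : supp (fun i => if i ∈ T then (1 : ZMod 2) else 0) = T := by
        ext i
        rw [mem_supp]
        by_cases h : i ∈ T <;> simp [h]
      rw [this, hT.2]
    · ext i
      rw [mem_supp]
      by_cases h : i ∈ T <;> simp [h]

lemma abs_A_le (u : Fin n → ZMod 2) (j : ℕ) : |A n u j| ≤ (n.choose j : ℝ) := by
  calc |A n u j| ≤ ∑ w ∈ sphere n j, |chi0 (dotF2 n u w)| := Finset.abs_sum_le_sum_abs _ _
  _ ≤ ∑ w ∈ sphere n j, 1 := by
      apply Finset.sum_le_sum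
      intro w _
      rcases zmod2_cases (dotF2 n u w) with h | h <;> rw [h] <;> norm_num [chi0]
  _ = (n.choose j : ℝ) := by rw [Finset.sum_const, card_sphere]; simp

end S16

namespace S16

lemma nat_div_succ (j : ℕ) : (j+3)/2 = (j+1)/2 + 1 := by omega

lemma decay (u : Fin n → ZMod 2) (s : ℕ) (hs1 : 1 ≤ s) (hsn : s < n)
    (hρ : |(n:ℝ) - 2 * #(supp u)| + s ≤ (n:ℝ) - s) :
    ∀ j, j ≤ s → |A n u j| ≤ (n.choose j : ℝ) *
      ((|(n:ℝ) - 2 * #(supp u)| + s) / ((n:ℝ) - s)) ^ ((j+1)/2) := by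
  have hns : (s:ℝ) < (n:ℝ) := by exact_mod_cast hsn
  have hden : (0:ℝ) < (n:ℝ) - s := by linarith
  set t : ℕ := #(supp u) with ht
  set ρ : ℝ := (|(n:ℝ) - 2*t| + s) / ((n:ℝ) - s) with hρdef
  have hnum : (0:ℝ) ≤ |(n:ℝ) - 2*t| + s := by positivity
  have hρ0 : 0 ≤ ρ := div_nonneg hnum hden.le
  have hρ1 : ρ ≤ 1 := (div_le_one hden).2 hρ
  have hρs : ρ * ((n:ℝ) - s) = |(n:ℝ) - 2*t| + s := div_mul_cancel₀ _ hden.ne'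
  -- P j
  set P : ℕ → Prop := fun j => |A n u j| ≤ (n.choose j : ℝ) * ρ ^ ((j+1)/2) with hP
  have base0 : P 0 := by
    rw [hP]
    simp [A_zero]
  have base1 : P 1 := by
    rw [hP]
    simp only [A_one, Nat.choose_one_right, pow_one]
    rw [← ht]
    have h1 : |(n:ℝ) - 2*t| * ((n:ℝ) - s) ≤ (n:ℝ) * (|(n:ℝ) - 2*t| + s) := by
      have habs : (0:ℝ) ≤ |(n:ℝ) - 2*t| := abs_nonneg _
      have hsr : (0:ℝ) ≤ (s:ℝ) := by positivity
      have hnr : (0:ℝ) < (n:ℝ) := by linarith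
      nlinarith
    rw [show (1+1)/2 = 1 by norm_num, pow_one, hρdef, ← mul_div_assoc, le_div_iff₀ hden]
    linarith [h1]
  have step : ∀ j, P j → P (j+1) → j + 2 ≤ s → P (j+2) := by
    intro j hPj hPj1 hj2
    have key := three_term u j
    rw [← ht] at key
    have hjn : j + 2 ≤ n := le_trans hj2 hsn.le
    have hCpos : (0:ℝ) < (n.choose (j+1) : ℝ) := by
      exact_mod_cast Nat.choose_pos (by omega : j+1 ≤ n)
    -- identities
    have idA : ((j:ℝ)+2) * (n.choose (j+2) : ℝ) = ((n:ℝ) - (j+1)) * (n.choose (j+1) : ℝ) := by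
      have := Nat.choose_succ_right_eq n (j+1)
      have hcast : ((n.choose (j+2) * (j+2) : ℕ) : ℝ) = ((n.choose (j+1) * (n - (j+1)) : ℕ) : ℝ) := by
        exact_mod_cast congrArg (Nat.cast : ℕ → ℝ) this
      push_cast [Nat.cast_sub (by omega : j+1 ≤ n)] at hcast
      linarith
    have idB : ((n:ℝ) - j) * (n.choose j : ℝ) = ((j:ℝ)+1) * (n.choose (j+1) : ℝ) := by
      have := Nat.choose_succ_right_eq n j
      have hcast : ((n.choose (j+1) * (j+1) : ℕ) : ℝ) = ((n.choose j * (n - j) : ℕ) : ℝ) := by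
        exact_mod_cast congrArg (Nat.cast : ℕ → ℝ) this
      push_cast [Nat.cast_sub (by omega : j ≤ n)] at hcast
      linarith
    -- the coefficient inequality
    have coeff : |(n:ℝ) - 2*t| * (n.choose (j+1) : ℝ) + ((n:ℝ) - j) * (n.choose j : ℝ)
        ≤ ((j:ℝ)+2) * (n.choose (j+2) : ℝ) * ρ := by
      rw [idA, idB]
      have h1 : ((n:ℝ) - (j+1)) * ρ ≥ ((n:ℝ) - s) * ρ := by
        apply mul_le_mul_of_nonneg_right _ hρ0
        have : (j:ℝ) + 1 ≤ (s:ℝ) := by exact_mod_cast (by omega : j+1 ≤ s)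
        linarith
      have h2 : ((n:ℝ) - s) * ρ = |(n:ℝ) - 2*t| + s := by linarith [hρs]
      have h3 : (j:ℝ) + 1 ≤ (s:ℝ) := by exact_mod_cast (by omega : j+1 ≤ s)
      calc |(n:ℝ) - 2*t| * (n.choose (j+1) : ℝ) + ((j:ℝ)+1) * (n.choose (j+1) : ℝ)
          = (|(n:ℝ) - 2*t| + ((j:ℝ)+1)) * (n.choose (j+1) : ℝ) := by ring
        _ ≤ (|(n:ℝ) - 2*t| + s) * (n.choose (j+1) : ℝ) := by
            apply mul_le_mul_of_nonneg_right _ hCpos.le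
            linarith
        _ = ((n:ℝ) - s) * ρ * (n.choose (j+1) : ℝ) := by rw [h2]
        _ ≤ ((n:ℝ) - (j+1)) * ρ * (n.choose (j+1) : ℝ) := by
            apply mul_le_mul_of_nonneg_right _ hCpos.le
            linarith [h1]
        _ = ((n:ℝ) - (j+1)) * (n.choose (j+1) : ℝ) * ρ := by ring
    -- powers
    have hc1 : ρ ^ ((j+2)/2) ≤ ρ ^ ((j+1)/2) := pow_le_pow_of_le_one hρ0 hρ1 (by omega)
    have hA1 := hPj1
    have hA0 := hPj
    rw [hP] at hA1 hA0 ⊢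
    have habs : ((j:ℝ)+2) * |A n u (j+2)| ≤
        |(n:ℝ) - 2*t| * |A n u (j+1)| + ((n:ℝ) - j) * |A n u j| := by
      have e : ((j:ℝ)+2) * |A n u (j+2)| = |((j:ℝ)+2) * A n u (j+2)| := by
        rw [abs_mul, abs_of_nonneg (by positivity : (0:ℝ) ≤ (j:ℝ)+2)]
      rw [e, key]
      calc |((n:ℝ) - 2*t) * A n u (j+1) - ((n:ℝ) - j) * A n u j|
          ≤ |((n:ℝ) - 2*t) * A n u (j+1)| + |((n:ℝ) - j) * A n u j| := abs_sub _ _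
        _ = |(n:ℝ) - 2*t| * |A n u (j+1)| + |(n:ℝ) - j| * |A n u j| := by
            rw [abs_mul, abs_mul]
        _ = |(n:ℝ) - 2*t| * |A n u (j+1)| + ((n:ℝ) - j) * |A n u j| := by
            rw [abs_of_nonneg (by
              have : (j:ℝ) ≤ (n:ℝ) := by exact_mod_cast (by omega : j ≤ n)
              linarith : (0:ℝ) ≤ (n:ℝ) - j)]
    have bound : ((j:ℝ)+2) * |A n u (j+2)| ≤
        (|(n:ℝ) - 2*t| * (n.choose (j+1) : ℝ) + ((n:ℝ) - j) * (n.choose j : ℝ)) * ρ ^ ((j+1)/2) := by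
      have b1 : |(n:ℝ) - 2*t| * |A n u (j+1)| ≤
          |(n:ℝ) - 2*t| * ((n.choose (j+1) : ℝ) * ρ ^ ((j+1)/2)) := by
        apply mul_le_mul_of_nonneg_left _ (abs_nonneg _)
        calc |A n u (j+1)| ≤ (n.choose (j+1) : ℝ) * ρ ^ ((j+1+1)/2) := hA1
          _ ≤ (n.choose (j+1) : ℝ) * ρ ^ ((j+1)/2) := by
              apply mul_le_mul_of_nonneg_left _ hCpos.le
              exact pow_le_pow_of_le_one hρ0 hρ1 (by omega)
      have b0 : ((n:ℝ) - j) * |A n u j| ≤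
          ((n:ℝ) - j) * ((n.choose j : ℝ) * ρ ^ ((j+1)/2)) := by
        apply mul_le_mul_of_nonneg_left _ (by
          have : (j:ℝ) ≤ (n:ℝ) := by exact_mod_cast (by omega : j ≤ n)
          linarith : (0:ℝ) ≤ (n:ℝ) - j)
        exact hA0
      calc ((j:ℝ)+2) * |A n u (j+2)| ≤ _ := habs
        _ ≤ |(n:ℝ) - 2*t| * ((n.choose (j+1) : ℝ) * ρ ^ ((j+1)/2))
            + ((n:ℝ) - j) * ((n.choose j : ℝ) * ρ ^ ((j+1)/2)) := by linarith [b1, b0]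
        _ = (|(n:ℝ) - 2*t| * (n.choose (j+1) : ℝ) + ((n:ℝ) - j) * (n.choose j : ℝ)) * ρ ^ ((j+1)/2) := by
            ring
    have final : ((j:ℝ)+2) * |A n u (j+2)| ≤ ((j:ℝ)+2) * ((n.choose (j+2) : ℝ) * ρ ^ ((j+2+1)/2)) := by
      calc ((j:ℝ)+2) * |A n u (j+2)| ≤ _ := bound
        _ ≤ (((j:ℝ)+2) * (n.choose (j+2) : ℝ) * ρ) * ρ ^ ((j+1)/2) := by
            apply mul_le_mul_of_nonneg_right coeff (pow_nonneg hρ0 _)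
        _ = ((j:ℝ)+2) * ((n.choose (j+2) : ℝ) * (ρ ^ ((j+1)/2) * ρ)) := by ring
        _ = ((j:ℝ)+2) * ((n.choose (j+2) : ℝ) * ρ ^ ((j+2+1)/2)) := by
            rw [show (j+2+1)/2 = (j+1)/2 + 1 from nat_div_succ j, pow_succ]
    exact le_of_mul_le_mul_left final (by positivity : (0:ℝ) < (j:ℝ)+2)
  -- package the two-step induction
  have both : ∀ j, (j ≤ s → P j) ∧ (j + 1 ≤ s → P (j+1)) := by
    intro j
    induction j with
    | zero => exact ⟨fun _ => base0, fun _ => base1⟩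
    | succ i ih =>
        refine ⟨fun h => ih.2 h, fun h => ?_⟩
        exact step i (ih.1 (by omega)) (ih.2 (by omega)) h
  intro j hj
  exact (both j).1 hj

end S16

namespace S16

lemma chi0_sum {ι : Type*} (s : Finset ι) (f : ι → ZMod 2) :
    chi0 (∑ i ∈ s, f i) = ∏ i ∈ s, chi0 (f i) := by
  induction s using Finset.cons_induction with
  | empty => simp [chi0]
  | cons a s ha ih => rw [Finset.sum_cons, Finset.prod_cons, chi0_add', ih]

lemma dot_sum (u : Fin n → ZMod 2) {ι : Type*} (s : Finset ι) (g : ι → (Fin n → ZMod 2)) :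
    dotF2 n u (∑ i ∈ s, g i) = ∑ i ∈ s, dotF2 n u (g i) := by
  unfold dotF2
  rw [Finset.sum_comm]
  apply Finset.sum_congr rfl
  intro k _
  rw [Finset.sum_apply, Finset.mul_sum]

lemma sum_chi0_dot (v : Fin n → ZMod 2) :
    ∑ u : Fin n → ZMod 2, chi0 (dotF2 n u v) = if v = 0 then (2:ℝ)^n else 0 := by
  have key : ∀ u : Fin n → ZMod 2, chi0 (dotF2 n u v) = ∏ k, chi0 (u k * v k) := by
    intro u
    exact chi0_sum _ _
  simp_rw [key]
  rw [← Fintype.piFinset_univ, ← Finset.prod_univ_sum (fun _ => (univ : Finset (ZMod 2)))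
    (fun k x => chi0 (x * v k))]
  have single : ∀ a : ZMod 2, ∑ x : ZMod 2, chi0 (x * a) = if a = 0 then (2:ℝ) else 0 := by
    intro a
    have huniv : (univ : Finset (ZMod 2)) = {0, 1} := by decide
    rcases zmod2_cases a with h | h <;> subst h <;> rw [huniv] <;> norm_num [chi0]
  simp_rw [single]
  by_cases hv : v = 0
  · subst hv
    simp
  · rw [if_neg hv]
    obtain ⟨k, hk⟩ : ∃ k, v k ≠ 0 := by
      by_contra h
      push_neg at h
      exact hv (funext fun k => h k)
    exact Finset.prod_eq_zero (Finset.mem_univ k) (by rw [if_neg hk])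

lemma moment_identity (X : Finset (Fin n → ZMod 2)) (N : ℕ) :
    ∑ u : Fin n → ZMod 2, (∑ w ∈ X, chi0 (dotF2 n u w)) ^ N
      = (2:ℝ)^n * #((Fintype.piFinset (fun _ : Fin N => X)).filter
          (fun p => ∑ i, p i = 0)) := by
  classical
  have expand : ∀ u : Fin n → ZMod 2, (∑ w ∈ X, chi0 (dotF2 n u w)) ^ N
      = ∑ p ∈ Fintype.piFinset (fun _ : Fin N => X), chi0 (dotF2 n u (∑ i, p i)) := by
    intro u
    rw [← Fin.prod_const N, Finset.prod_univ_sum]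
    apply Finset.sum_congr rfl
    intro p _
    rw [dot_sum, chi0_sum]
  simp_rw [expand]
  rw [Finset.sum_comm]
  have inner : ∀ p ∈ Fintype.piFinset (fun _ : Fin N => X),
      ∑ u : Fin n → ZMod 2, chi0 (dotF2 n u (∑ i, p i))
        = if (∑ i, p i) = 0 then (2:ℝ)^n else 0 := fun p _ => sum_chi0_dot _
  rw [Finset.sum_congr rfl inner, Finset.sum_ite, Finset.sum_const_zero, add_zero,
    Finset.sum_const, nsmul_eq_mul, mul_comm]

lemma moment_mono (X Y : Finset (Fin n → ZMod 2)) (hXY : X ⊆ Y) (N : ℕ) :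
    #((Fintype.piFinset (fun _ : Fin N => X)).filter (fun p => ∑ i, p i = 0))
      ≤ #((Fintype.piFinset (fun _ : Fin N => Y)).filter (fun p => ∑ i, p i = 0)) := by
  apply Finset.card_le_card
  apply Finset.filter_subset_filter
  exact Fintype.piFinset_subset _ _ (fun _ => hXY)

end S16

namespace S16

lemma hammingNorm_le_n (u : Fin n → ZMod 2) : hammingNorm u ≤ n := by
  rw [hn_eq_supp]
  calc #(supp u) ≤ #(univ : Finset (Fin n)) := Finset.card_le_card (Finset.subset_univ _)
    _ = n := by rw [Finset.card_univ, Fintype.card_fin]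

noncomputable def beta (n : ℕ) (s : ℕ) (u : Fin n → ZMod 2) : ℝ :=
  if 3*s ≤ min (hammingNorm u) (n - hammingNorm u)
  then ((n:ℝ)⁻¹)^(min (hammingNorm u) (n - hammingNorm u)) else 1

lemma per_u (s L : ℕ) (hn : n = s^2) (hs : 3 ≤ s) (hL2 : n ≤ 2^L) (u : Fin n → ZMod 2) :
    (A n u s)^(2*(s*L)) ≤ (n.choose s : ℝ)^(2*(s*L)) * beta n s u := by
  have hsn : s < n := by nlinarith [hn]
  have htn : hammingNorm u ≤ n := hammingNorm_le_n u
  set t : ℕ := hammingNorm u with htdef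
  set tb : ℕ := min t (n - t) with htb
  have hts : t = #(supp u) := hn_eq_supp u
  have hCpos : (0:ℝ) < (n.choose s : ℝ) := by
    exact_mod_cast Nat.choose_pos hsn.le
  have heven : (A n u s)^(2*(s*L)) = |A n u s|^(2*(s*L)) := by
    rw [Even.pow_abs ⟨s*L, by ring⟩]
  unfold beta
  rw [← htdef, ← htb]
  by_cases hcond : 3*s ≤ tb
  · rw [if_pos hcond]
    -- basic real facts
    have hNpos : (0:ℝ) < (n:ℝ) := by exact_mod_cast (by omega : 0 < n)
    have htb2 : 2 * tb ≤ n := by omega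
    have habs_eq : |(n:ℝ) - 2 * #(supp u)| = (n:ℝ) - 2 * tb := by
      rw [← hts]
      rcases le_or_gt t (n - t) with h | h
      · have h2 : 2 * t ≤ n := by omega
        have : tb = t := by omega
        rw [this, abs_of_nonneg]
        have : (2:ℝ) * t ≤ (n:ℝ) := by exact_mod_cast h2
        linarith
      · have h2 : n ≤ 2 * t := by omega
        have htbe : tb = n - t := by omega
        have hc1 : ((n - t : ℕ) : ℝ) = (n:ℝ) - t := by
          rw [Nat.cast_sub htn]
        rw [htbe, abs_of_nonpos, hc1]
        · ring
        · have : (n:ℝ) ≤ 2 * t := by exact_mod_cast h2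
          linarith
    have hρcond : |(n:ℝ) - 2 * #(supp u)| + s ≤ (n:ℝ) - s := by
      rw [habs_eq]
      have h1 : (s:ℝ) ≤ (tb:ℝ) := by
        exact_mod_cast (by omega : s ≤ tb)
      linarith
    have hdec := decay u s (by omega) hsn hρcond s le_rfl
    set ρ : ℝ := (|(n:ℝ) - 2 * #(supp u)| + s) / ((n:ℝ) - s) with hρdef
    have hden : (0:ℝ) < (n:ℝ) - s := by
      have : (s:ℝ) < (n:ℝ) := by exact_mod_cast hsn
      linarith
    have hρ0 : 0 ≤ ρ := by
      apply div_nonneg _ hden.le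
      positivity
    have hρ1 : ρ ≤ 1 := by
      rw [hρdef, div_le_one hden]
      exact hρcond
    -- step 1 : |A|^{2sL} ≤ C^{2sL} * ρ^{(s+1)/2 * (2sL)}
    have s1 : |A n u s|^(2*(s*L)) ≤ (n.choose s : ℝ)^(2*(s*L)) * ρ^(((s+1)/2) * (2*(s*L))) := by
      have h1 : |A n u s|^(2*(s*L)) ≤ ((n.choose s : ℝ) * ρ^((s+1)/2))^(2*(s*L)) :=
        pow_le_pow_left₀ (abs_nonneg _) hdec _
      have h2 : ((n.choose s : ℝ) * ρ^((s+1)/2))^(2*(s*L))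
          = (n.choose s : ℝ)^(2*(s*L)) * ρ^(((s+1)/2) * (2*(s*L))) := by
        rw [mul_pow, ← pow_mul]
      rw [← h2]
      exact h1
    -- step 2 : ρ^{(s+1)/2 * 2sL} ≤ ρ^{n*L}
    have s2 : ρ^(((s+1)/2) * (2*(s*L))) ≤ ρ^(n*L) := by
      apply pow_le_pow_of_le_one hρ0 hρ1
      have : n = s * s := by rw [hn]; ring
      have h2 : s ≤ ((s+1)/2) * 2 := by omega
      calc n * L = s * s * L := by rw [this]
        _ ≤ (((s+1)/2) * 2) * s * L := by
            apply Nat.mul_le_mul_right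
            exact Nat.mul_le_mul_right s h2
        _ = ((s+1)/2) * (2*(s*L)) := by ring
    -- step 3 : ρ ≤ exp (-(2*((tb:ℝ)-s)/n))
    have s3 : ρ ≤ Real.exp (-(2*((tb:ℝ)-s)/(n:ℝ))) := by
      have hbs : (s:ℝ) ≤ (tb:ℝ) := by exact_mod_cast (by omega : s ≤ tb)
      have step_a : ρ ≤ 1 - 2*((tb:ℝ)-s)/(n:ℝ) := by
        rw [hρdef, habs_eq]
        rw [div_le_iff₀ hden]
        have expand : (1 - 2*((tb:ℝ)-s)/(n:ℝ)) * ((n:ℝ) - s)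
            = ((n:ℝ) - 2*((tb:ℝ)-s)) * ((n:ℝ) - s) / (n:ℝ) := by
          field_simp
          all_goals ring
        rw [expand, le_div_iff₀ hNpos]
        have htbr : (tb:ℝ) ≥ (s:ℝ) := hbs
        nlinarith [hbs, hden.le, hNpos.le]
      calc ρ ≤ 1 - 2*((tb:ℝ)-s)/(n:ℝ) := step_a
        _ ≤ Real.exp (-(2*((tb:ℝ)-s)/(n:ℝ))) := by
            have := Real.add_one_le_exp (-(2*((tb:ℝ)-s)/(n:ℝ)))
            linarith
    -- step 4 : exp(...)^{nL} ≤ (n⁻¹)^{tb}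
    have s4 : ρ^(n*L) ≤ ((n:ℝ)⁻¹)^tb := by
      have e1 : ρ^(n*L) ≤ (Real.exp (-(2*((tb:ℝ)-s)/(n:ℝ))))^(n*L) :=
        pow_le_pow_left₀ hρ0 s3 _
      have e2 : (Real.exp (-(2*((tb:ℝ)-s)/(n:ℝ))))^(n*L)
          = Real.exp (-(2*((tb:ℝ)-s)*L)) := by
        rw [← Real.exp_nat_mul]
        congr 1
        push_cast
        field_simp
        all_goals ring
      have e3 : ((n:ℝ)⁻¹)^tb = Real.exp (-((tb:ℝ) * Real.log n)) := by
        rw [← Real.exp_log hNpos, ← Real.exp_neg, ← Real.exp_nat_mul]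
        congr 1
        rw [Real.exp_log hNpos]  -- may be unnecessary
        ring
      calc ρ^(n*L) ≤ (Real.exp (-(2*((tb:ℝ)-s)/(n:ℝ))))^(n*L) := e1
        _ = Real.exp (-(2*((tb:ℝ)-s)*L)) := e2
        _ ≤ Real.exp (-((tb:ℝ) * Real.log n)) := by
            apply Real.exp_le_exp.2
            have hlog2 : Real.log 2 < 0.6931471808 := Real.log_two_lt_d9
            have hlogn : Real.log n ≤ L * Real.log 2 := by
              calc Real.log n ≤ Real.log (2^L) := by
                    apply Real.log_le_log hNpos
                    exact_mod_cast hL2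
                _ = L * Real.log 2 := by rw [Real.log_pow]
            have hbs : 3 * (s:ℝ) ≤ (tb:ℝ) := by exact_mod_cast hcond
            have htbpos : (0:ℝ) ≤ (tb:ℝ) := by positivity
            have hLpos : (0:ℝ) ≤ (L:ℝ) := by positivity
            have hlogn_pos : 0 ≤ Real.log n :=
              Real.log_nonneg (by exact_mod_cast (by omega : 1 ≤ n))
            have hlog2pos : 0 ≤ Real.log 2 := Real.log_nonneg (by norm_num)
            nlinarith [mul_le_mul_of_nonneg_left hlogn htbpos,
              mul_nonneg (mul_nonneg hLpos htbpos) hlog2pos]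
        _ = ((n:ℝ)⁻¹)^tb := e3.symm
    calc (A n u s)^(2*(s*L)) = |A n u s|^(2*(s*L)) := heven
      _ ≤ (n.choose s : ℝ)^(2*(s*L)) * ρ^(((s+1)/2) * (2*(s*L))) := s1
      _ ≤ (n.choose s : ℝ)^(2*(s*L)) * ρ^(n*L) := by
          apply mul_le_mul_of_nonneg_left s2 (by positivity)
      _ ≤ (n.choose s : ℝ)^(2*(s*L)) * ((n:ℝ)⁻¹)^tb := by
          apply mul_le_mul_of_nonneg_left s4 (by positivity)
  · rw [if_neg hcond, mul_one]
    rw [heven]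
    apply pow_le_pow_left₀ (abs_nonneg _) (abs_A_le u s)

end S16

namespace S16

lemma sum_beta_le (s : ℕ) (hs : 1 ≤ s) (hn1 : 1 ≤ n) :
    ∑ u : Fin n → ZMod 2, beta n s u ≤ ((n:ℝ)+1) * (n:ℝ)^(3*s) := by
  classical
  have hmap : ∀ u : Fin n → ZMod 2, hammingNorm u ∈ Finset.range (n+1) := by
    intro u
    rw [Finset.mem_range]
    exact Nat.lt_succ_of_le (hammingNorm_le_n u)
  rw [← Finset.sum_fiberwise_of_maps_to (fun u (_ : u ∈ univ) => hmap u) (beta n s)]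
  have fiber : ∀ m ∈ Finset.range (n+1),
      ∑ u ∈ univ.filter (fun u : Fin n → ZMod 2 => hammingNorm u = m), beta n s u
        ≤ (n:ℝ)^(3*s) := by
    intro m hm
    have hmn : m ≤ n := by
      rw [Finset.mem_range] at hm
      omega
    have hval : ∀ u ∈ univ.filter (fun u : Fin n → ZMod 2 => hammingNorm u = m),
        beta n s u = (if 3*s ≤ min m (n - m) then ((n:ℝ)⁻¹)^(min m (n-m)) else 1) := by
      intro u hu
      rw [Finset.mem_filter] at hu
      unfold beta
      rw [hu.2]
    rw [Finset.sum_congr rfl hval, Finset.sum_const]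
    have hcard : #(univ.filter (fun u : Fin n → ZMod 2 => hammingNorm u = m)) = n.choose m :=
      card_sphere m
    rw [hcard, nsmul_eq_mul]
    have hNpos : (0:ℝ) < (n:ℝ) := by exact_mod_cast hn1
    have hchoose : (n.choose m : ℝ) ≤ (n:ℝ)^(min m (n-m)) := by
      rcases le_or_gt m (n - m) with h | h
      · rw [min_eq_left h]
        exact_mod_cast Nat.choose_le_pow n m
      · rw [min_eq_right h.le]
        have : n.choose m = n.choose (n - m) := by
          rw [Nat.choose_symm hmn]
        rw [this]
        exact_mod_cast Nat.choose_le_pow n (n-m)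
    by_cases hc : 3*s ≤ min m (n - m)
    · rw [if_pos hc]
      calc (n.choose m : ℝ) * ((n:ℝ)⁻¹)^(min m (n-m))
          ≤ (n:ℝ)^(min m (n-m)) * ((n:ℝ)⁻¹)^(min m (n-m)) := by
            apply mul_le_mul_of_nonneg_right hchoose (by positivity)
        _ = 1 := by
            rw [← mul_pow, mul_inv_cancel₀ hNpos.ne', one_pow]
        _ ≤ (n:ℝ)^(3*s) := one_le_pow₀ (by exact_mod_cast hn1)
    · rw [if_neg hc, mul_one]
      calc (n.choose m : ℝ) ≤ (n:ℝ)^(min m (n-m)) := hchoose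
        _ ≤ (n:ℝ)^(3*s) := by
            apply pow_le_pow_right₀ (by exact_mod_cast hn1)
            omega
  calc ∑ m ∈ Finset.range (n+1), ∑ u ∈ univ.filter
        (fun u : Fin n → ZMod 2 => hammingNorm u = m), beta n s u
      ≤ ∑ m ∈ Finset.range (n+1), (n:ℝ)^(3*s) := Finset.sum_le_sum fiber
    _ = ((n:ℝ)+1) * (n:ℝ)^(3*s) := by
        rw [Finset.sum_const, Finset.card_range, nsmul_eq_mul]
        push_cast
        ring

lemma sum_A_pow_le (s L : ℕ) (hn : n = s^2) (hs : 3 ≤ s) (hL2 : n ≤ 2^L) :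
    ∑ u : Fin n → ZMod 2, (A n u s)^(2*(s*L))
      ≤ (n.choose s : ℝ)^(2*(s*L)) * (((n:ℝ)+1) * (n:ℝ)^(3*s)) := by
  have hn1 : 1 ≤ n := by nlinarith [hn]
  calc ∑ u : Fin n → ZMod 2, (A n u s)^(2*(s*L))
      ≤ ∑ u : Fin n → ZMod 2, (n.choose s : ℝ)^(2*(s*L)) * beta n s u :=
        Finset.sum_le_sum (fun u _ => per_u s L hn hs hL2 u)
    _ = (n.choose s : ℝ)^(2*(s*L)) * ∑ u : Fin n → ZMod 2, beta n s u := by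
        rw [← Finset.mul_sum]
    _ ≤ (n.choose s : ℝ)^(2*(s*L)) * (((n:ℝ)+1) * (n:ℝ)^(3*s)) := by
        apply mul_le_mul_of_nonneg_left (sum_beta_le s (by omega) hn1) (by positivity)

end S16

namespace S16

-- numeric helper : log n ≥ 4 for n ≥ 100
lemma log_ge_four {x : ℝ} (hx : (100:ℝ) ≤ x) : (4:ℝ) ≤ Real.log x := by
  have hexp : Real.exp 4 ≤ 100 := by
    have h1 : Real.exp 1 < 2.7182818286 := Real.exp_one_lt_d9
    have h4 : Real.exp 4 = (Real.exp 1)^(4:ℕ) := by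
      rw [← Real.exp_nat_mul]
      norm_num
    rw [h4]
    calc (Real.exp 1)^(4:ℕ) ≤ (2.7182818286:ℝ)^(4:ℕ) := by
          apply pow_le_pow_left₀ (Real.exp_pos 1).le h1.le
      _ ≤ 100 := by norm_num
  have := Real.exp_le_exp.2 (le_refl (4:ℝ))
  rw [← Real.exp_le_exp, Real.exp_log (by linarith : (0:ℝ) < x)]
  linarith

lemma clog_le (n : ℕ) (hn : 100 ≤ n) : ((Nat.clog 2 n : ℕ) : ℝ) ≤ 3 * Real.log n := by
  have hn2 : 1 < n := by omega
  have hL1 : 0 < Nat.clog 2 n := Nat.clog_pos (by norm_num) (by omega)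
  have hpow : 2 ^ (Nat.clog 2 n - 1) < n := by
    have := Nat.pow_pred_clog_lt_self (by norm_num : 1 < 2) hn2
    exact this
  have hlogpow : ((Nat.clog 2 n : ℕ) - 1 : ℕ) * Real.log 2 ≤ Real.log n := by
    calc ((Nat.clog 2 n : ℕ) - 1 : ℕ) * Real.log 2 = Real.log ((2:ℝ) ^ ((Nat.clog 2 n : ℕ) - 1 : ℕ)) := by
          rw [Real.log_pow]
      _ ≤ Real.log n := by
          apply Real.log_le_log (by positivity)
          exact_mod_cast hpow.le
  have hcast : (((Nat.clog 2 n : ℕ) - 1 : ℕ) : ℝ) = ((Nat.clog 2 n : ℕ) : ℝ) - 1 := by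
    rw [Nat.cast_sub hL1]
    norm_num
  rw [hcast] at hlogpow
  have hlog2 : (0.6931471803:ℝ) < Real.log 2 := Real.log_two_gt_d9
  have hlogn : (4:ℝ) ≤ Real.log n := log_ge_four (by exact_mod_cast hn)
  nlinarith [hlogpow, hlog2, hlogn]

end S16

set_option maxHeartbeats 2000000 in
open S16 in
theorem stmt16 (δ : ℝ) (hδ : 0 < δ) :
    ∃ N : ℕ, ∀ n s : ℕ, n = s ^ 2 → N ≤ n →
      ∀ B' : Finset (Fin n → ZMod 2), B' ⊆ sphereB n s →
        δ * (sphereB n s).card ≤ (B'.card : ℝ) →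
        (Set.ncard {u : Fin n → ZMod 2 |
            (0.98 : ℝ) * B'.card ≤ ∑ w ∈ B', chi n u w} : ℝ) ≤
          Real.exp ((n : ℝ) ^ ((2 : ℝ) / 3)) := by
  classical
  set c : ℝ := Real.log (max 1 ((0.98 * δ)⁻¹)) with hc
  have hc0 : 0 ≤ c := Real.log_nonneg (le_max_left _ _)
  set Adel : ℝ := 5 + 6 * c with hAdel
  have hAdel_pos : (0:ℝ) < Adel := by rw [hAdel]; linarith
  refine ⟨max 100 (Nat.ceil ((12*Adel)^(12:ℕ)) + 1), ?_⟩
  intro n s hn hN B' hBsub hBcard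
  have hn100 : 100 ≤ n := le_trans (le_max_left _ _) hN
  have hnceil : ((12*Adel)^(12:ℕ) : ℝ) ≤ (n:ℝ) := by
    have h1 : Nat.ceil ((12*Adel)^(12:ℕ)) + 1 ≤ n := le_trans (le_max_right _ _) hN
    calc ((12*Adel)^(12:ℕ) : ℝ) ≤ (Nat.ceil ((12*Adel)^(12:ℕ)) : ℝ) := Nat.le_ceil _
      _ ≤ (n:ℝ) := by exact_mod_cast (by omega : Nat.ceil ((12*Adel)^(12:ℕ)) ≤ n)
  have hs10 : 10 ≤ s := by nlinarith [hn, hn100]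
  have hs3 : 3 ≤ s := by omega
  have hsn : s < n := by nlinarith [hn]
  have hNpos : (0:ℝ) < (n:ℝ) := by exact_mod_cast (by omega : 0 < n)
  set L : ℕ := Nat.clog 2 n with hLdef
  have hL2 : n ≤ 2^L := Nat.le_pow_clog (by norm_num) n
  set N2 : ℕ := 2*(s*L) with hN2
  set C : ℝ := (n.choose s : ℝ) with hC
  have hCpos : (0:ℝ) < C := by
    rw [hC]; exact_mod_cast Nat.choose_pos hsn.le
  have hsphB : sphereB n s = sphere n s := rfl
  have hsphcard : ((sphereB n s).card : ℝ) = C := by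
    rw [hsphB, hC, card_sphere s]
  have hB'pos : (0:ℝ) < (B'.card : ℝ) := by
    have : 0 < δ * C := by positivity
    rw [hsphcard] at hBcard
    linarith
  set T : Finset (Fin n → ZMod 2) :=
    univ.filter (fun u => (0.98:ℝ) * B'.card ≤ ∑ w ∈ B', chi n u w) with hT
  have hsetT : {u : Fin n → ZMod 2 | (0.98:ℝ) * B'.card ≤ ∑ w ∈ B', chi n u w} = ↑T := by
    ext u
    simp [hT]
  rw [hsetT, Set.ncard_coe_finset]
  -- Step 1: moment bound
  have hchi : ∀ u w : Fin n → ZMod 2, chi n u w = chi0 (dotF2 n u w) := fun u w => rfl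
  have heven_nonneg : ∀ (x : ℝ), 0 ≤ x ^ N2 := by
    intro x
    rw [hN2]
    exact Even.pow_nonneg ⟨s*L, by ring⟩ x
  have chain1 : (#T : ℝ) * ((0.98:ℝ) * B'.card)^N2
      ≤ ∑ u : Fin n → ZMod 2, (∑ w ∈ B', chi0 (dotF2 n u w))^N2 := by
    have h1 : ∀ u ∈ T, ((0.98:ℝ) * B'.card)^N2 ≤ (∑ w ∈ B', chi0 (dotF2 n u w))^N2 := by
      intro u hu
      rw [hT, Finset.mem_filter] at hu
      apply pow_le_pow_left₀ (by positivity)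
      simp_rw [← hchi]
      exact hu.2
    calc (#T : ℝ) * ((0.98:ℝ) * B'.card)^N2
        = ∑ _u ∈ T, ((0.98:ℝ) * B'.card)^N2 := by
          rw [Finset.sum_const, nsmul_eq_mul]
      _ ≤ ∑ u ∈ T, (∑ w ∈ B', chi0 (dotF2 n u w))^N2 := Finset.sum_le_sum h1
      _ ≤ ∑ u : Fin n → ZMod 2, (∑ w ∈ B', chi0 (dotF2 n u w))^N2 := by
          apply Finset.sum_le_sum_of_subset_of_nonneg (Finset.subset_univ T)
          intro u _ _
          exact heven_nonneg _
  -- Step 2: moment identity + monotonicity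
  have chain2 : ∑ u : Fin n → ZMod 2, (∑ w ∈ B', chi0 (dotF2 n u w))^N2
      ≤ ∑ u : Fin n → ZMod 2, (A n u s)^N2 := by
    rw [moment_identity B' N2]
    have hA : ∀ u, A n u s = ∑ w ∈ sphere n s, chi0 (dotF2 n u w) := fun u => rfl
    simp_rw [hA]
    rw [moment_identity (sphere n s) N2]
    apply mul_le_mul_of_nonneg_left _ (by positivity)
    exact_mod_cast moment_mono B' (sphere n s) (by rw [← hsphB]; exact hBsub) N2
  -- Step 3: Krawtchouk bound
  have chain3 : ∑ u : Fin n → ZMod 2, (A n u s)^N2 ≤ C^N2 * (((n:ℝ)+1) * (n:ℝ)^(3*s)) := by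
    rw [hN2, hC]
    exact sum_A_pow_le s L hn hs3 hL2
  -- Combine and cancel C^N2
  have hkey : (#T : ℝ) * ((0.98:ℝ) * δ)^N2 ≤ ((n:ℝ)+1) * (n:ℝ)^(3*s) := by
    have hineq : (#T : ℝ) * ((0.98:ℝ)*δ*C)^N2 ≤ C^N2 * (((n:ℝ)+1) * (n:ℝ)^(3*s)) := by
      calc (#T : ℝ) * ((0.98:ℝ)*δ*C)^N2 ≤ (#T : ℝ) * ((0.98:ℝ) * B'.card)^N2 := by
            apply mul_le_mul_of_nonneg_left _ (by positivity)
            apply pow_le_pow_left₀ (by positivity)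
            rw [hsphcard] at hBcard
            nlinarith [hBcard]
        _ ≤ _ := le_trans chain1 (le_trans chain2 chain3)
    have hexp : ((0.98:ℝ)*δ*C)^N2 = ((0.98:ℝ)*δ)^N2 * C^N2 := by rw [← mul_pow]
    rw [hexp] at hineq
    have hCN : (0:ℝ) < C^N2 := pow_pos hCpos _
    nlinarith [hineq, hCN, mul_pos (mul_pos (by norm_num : (0:ℝ) < 0.98) hδ) hCpos]
  -- final numeric estimate
  have hp : (0:ℝ) < ((0.98:ℝ)*δ)^N2 := pow_pos (by positivity) _
  have hT1 : (#T : ℝ) ≤ (((n:ℝ)+1) * (n:ℝ)^(3*s)) * ((0.98*δ)⁻¹)^N2 := by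
    have h1 := (le_div_iff₀ hp).2 hkey
    rw [div_eq_mul_inv, ← inv_pow] at h1
    exact h1
  have hmax_pos : (0:ℝ) < max 1 ((0.98*δ)⁻¹) := lt_of_lt_of_le one_pos (le_max_left _ _)
  have hb1 : ((0.98*δ)⁻¹)^N2 ≤ Real.exp ((N2:ℝ) * c) := by
    have h2 : ((0.98:ℝ)*δ)⁻¹ ≤ Real.exp c := by
      rw [hc, Real.exp_log hmax_pos]
      exact le_max_right _ _
    calc ((0.98*δ)⁻¹)^N2 ≤ (Real.exp c)^N2 := pow_le_pow_left₀ (by positivity) h2 _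
      _ = Real.exp ((N2:ℝ) * c) := by rw [← Real.exp_nat_mul]
  have hb2 : ((n:ℝ)+1) ≤ Real.exp (2 * Real.log n) := by
    have he : Real.exp (2 * Real.log n) = (n:ℝ)^(2:ℕ) := by
      rw [show (2:ℝ) * Real.log n = ((2:ℕ):ℝ) * Real.log n by norm_num,
        Real.exp_nat_mul, Real.exp_log hNpos]
    rw [he]
    have : (100:ℝ) ≤ (n:ℝ) := by exact_mod_cast hn100
    nlinarith
  have hb3 : (n:ℝ)^(3*s) = Real.exp (((3*s : ℕ):ℝ) * Real.log n) := by
    rw [Real.exp_nat_mul, Real.exp_log hNpos]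
  have hTexp : (#T : ℝ) ≤ Real.exp (2 * Real.log n + ((3*s:ℕ):ℝ) * Real.log n + (N2:ℝ) * c) := by
    calc (#T : ℝ) ≤ (((n:ℝ)+1) * (n:ℝ)^(3*s)) * ((0.98*δ)⁻¹)^N2 := hT1
      _ ≤ (Real.exp (2 * Real.log n) * Real.exp (((3*s:ℕ):ℝ) * Real.log n)) * Real.exp ((N2:ℝ)*c) := by
          apply mul_le_mul _ hb1 (by positivity) (by positivity)
          rw [hb3]
          apply mul_le_mul_of_nonneg_right hb2 (Real.exp_pos _).le
      _ = Real.exp (2 * Real.log n + ((3*s:ℕ):ℝ) * Real.log n + (N2:ℝ) * c) := by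
          rw [← Real.exp_add, ← Real.exp_add]
  have hlogn4 : (4:ℝ) ≤ Real.log n := log_ge_four (by exact_mod_cast hn100)
  have hL3 : ((L:ℕ):ℝ) ≤ 3 * Real.log n := clog_le n hn100
  have hsr1 : (1:ℝ) ≤ (s:ℝ) := by exact_mod_cast (by omega : 1 ≤ s)
  have hE : 2 * Real.log n + ((3*s:ℕ):ℝ) * Real.log n + (N2:ℝ) * c
      ≤ Adel * s * Real.log n := by
    have hN2c : (N2:ℝ) = 2 * s * L := by rw [hN2]; push_cast; ring
    have h3s : ((3*s:ℕ):ℝ) = 3 * s := by push_cast; ring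
    rw [hN2c, h3s, hAdel]
    have hLn : (0:ℝ) ≤ Real.log n := by linarith
    have hsp : (0:ℝ) ≤ (s:ℝ) := by linarith
    nlinarith [mul_le_mul_of_nonneg_left hL3 (mul_nonneg (mul_nonneg (by norm_num : (0:ℝ) ≤ 2) hsp) hc0),
      mul_le_mul_of_nonneg_right hsr1 hLn]
  -- s = n^{1/2}, log n ≤ 12 n^{1/12}, 12 Adel ≤ n^{1/12}
  have hs_eq : (s:ℝ) = (n:ℝ)^((1:ℝ)/2) := by
    have h1 : ((n:ℝ)) = (s:ℝ)^(2:ℕ) := by rw [hn]; push_cast; ring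
    rw [h1, ← Real.rpow_natCast (s:ℝ) 2, ← Real.rpow_mul (by positivity)]
    norm_num
  have hlog12 : Real.log n ≤ 12 * (n:ℝ)^((1:ℝ)/12) := by
    have h1 : Real.log ((n:ℝ)^((1:ℝ)/12)) = (1/12) * Real.log n := by
      rw [Real.log_rpow hNpos]
    have hpos : (0:ℝ) < (n:ℝ)^((1:ℝ)/12) := Real.rpow_pos_of_pos hNpos _
    have h2 : Real.log ((n:ℝ)^((1:ℝ)/12)) ≤ (n:ℝ)^((1:ℝ)/12) := by
      have := Real.log_le_sub_one_of_pos hpos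
      linarith
    linarith [h1, h2]
  have h12A : 12 * Adel ≤ (n:ℝ)^((1:ℝ)/12) := by
    calc 12*Adel = ((12*Adel)^(12:ℕ))^((1:ℝ)/12) := by
          rw [← Real.rpow_natCast (12*Adel) 12, ← Real.rpow_mul (by positivity)]
          norm_num
      _ ≤ (n:ℝ)^((1:ℝ)/12) := by
          apply Real.rpow_le_rpow (by positivity) hnceil (by norm_num)
  have hfinal : Adel * s * Real.log n ≤ (n:ℝ)^((2:ℝ)/3) := by
    have hrp : (0:ℝ) < (n:ℝ)^((1:ℝ)/12) := Real.rpow_pos_of_pos hNpos _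
    have hrp2 : (0:ℝ) < (n:ℝ)^((1:ℝ)/2) := Real.rpow_pos_of_pos hNpos _
    calc Adel * s * Real.log n ≤ Adel * s * (12 * (n:ℝ)^((1:ℝ)/12)) := by
          apply mul_le_mul_of_nonneg_left hlog12
          positivity
      _ = (12 * Adel) * (s:ℝ) * (n:ℝ)^((1:ℝ)/12) := by ring
      _ ≤ (n:ℝ)^((1:ℝ)/12) * (s:ℝ) * (n:ℝ)^((1:ℝ)/12) := by
          apply mul_le_mul_of_nonneg_right _ hrp.le
          apply mul_le_mul_of_nonneg_right h12A
          positivity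
      _ = (n:ℝ)^((1:ℝ)/12) * (n:ℝ)^((1:ℝ)/2) * (n:ℝ)^((1:ℝ)/12) := by rw [hs_eq]
      _ = (n:ℝ)^((2:ℝ)/3) := by
          rw [← Real.rpow_add hNpos, ← Real.rpow_add hNpos]
          norm_num
  calc (#T : ℝ) ≤ _ := hTexp
    _ ≤ Real.exp (Adel * s * Real.log n) := Real.exp_le_exp.2 hE
    _ ≤ Real.exp ((n:ℝ)^((2:ℝ)/3)) := Real.exp_le_exp.2 hfinal
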